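/- Let k̃ be a field and S ⊂ ℙ¹(k̃) a finite set. Then the set of separable rational maps R on ℙ¹(k̃) with R⁻¹{0,1,∞} ⊆ S is finite. -/

import Mathlib

open Polynomial
open scoped Classical

/-- Evaluation of a rational function `R ∈ K(T)` as a self-map of the projective line
`ℙ¹(K) = K ∪ {∞}`, encoded as `Option K` with `none` playing the role of `∞`. -/
noncomputable def evalP1 {K : Type*} [Field K] (R : RatFunc K) : Option K → Option K
  | none =>
      if R.num.natDegree > R.denom.natDegree then none
      else some (R.num.coeff R.denom.natDegree / R.denom.leadingCoeff)
  | some z =>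
      if R.denom.eval z = 0 then none
      else some (R.num.eval z / R.denom.eval z)

open UniqueFactorizationMonoid in
lemma montel_mem_primeFactors_iff {M : Type*} [CommMonoidWithZero M]
    [NormalizationMonoid M] [UniqueFactorizationMonoid M] {a q : M} :
    q ∈ primeFactors a ↔ q ∈ normalizedFactors a := by
  rw [primeFactors]; exact Multiset.mem_toFinset

open UniqueFactorizationMonoid in
lemma montel_radical_natDegree_le_card {K : Type*} [Field K] [IsAlgClosed K]
    (P : Polynomial K) (hP : P ≠ 0) :
    (radical P).natDegree ≤ P.roots.toFinset.card := by
  have hprime : ∀ q ∈ primeFactors P, Prime q := fun q hq =>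
    prime_of_normalized_factor q (montel_mem_primeFactors_iff.mp hq)
  have hdeg : ∀ q ∈ primeFactors P, q.natDegree = 1 := fun q hq =>
    natDegree_eq_of_degree_eq_some
      (IsAlgClosed.degree_eq_one_of_irreducible K (hprime q hq).irreducible)
  have hmonic : ∀ q ∈ primeFactors P, q.Monic := by
    intro q hq
    have h := normalize_normalized_factor q (montel_mem_primeFactors_iff.mp hq)
    rw [← h]
    exact monic_normalize (hprime q hq).ne_zero
  have hform : ∀ q ∈ primeFactors P, q = X + C (q.coeff 0) := by
    intro q hq
    have h1 : q.coeff 1 = 1 := by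
      have := (hmonic q hq).coeff_natDegree
      rwa [hdeg q hq] at this
    have h2 := eq_X_add_C_of_natDegree_le_one (le_of_eq (hdeg q hq))
    rwa [h1, C_1, one_mul] at h2
  have hrad : (radical P).natDegree = (primeFactors P).card := by
    have h0 : radical P = ∏ q ∈ primeFactors P, q := rfl
    rw [h0, natDegree_prod _ _ (fun q hq => (hprime q hq).ne_zero),
      Finset.sum_congr rfl hdeg, Finset.sum_const, smul_eq_mul, mul_one]
  rw [hrad]
  apply Finset.card_le_card_of_injOn (fun q => -(q.coeff 0))
  · intro q hq
    have hqdvd : q ∣ P := dvd_of_mem_normalizedFactors (montel_mem_primeFactors_iff.mp hq)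
    have hroot : P.IsRoot (-(q.coeff 0)) := by
      apply IsRoot.dvd _ hqdvd
      rw [IsRoot, hform q hq]
      simp
    simpa [Multiset.mem_toFinset, mem_roots'] using ⟨hP, hroot⟩
  · intro q hq q' hq' h
    simp only [neg_inj] at h
    rw [hform q hq, hform q' hq', h]

/-- Over an algebraically closed field `K`, for any finite set
`S ⊂ ℙ¹(K)`, the set of separable rational maps `R` with `R⁻¹{0,1,∞} ⊆ S` is finite.
Separability is expressed by the non-vanishing of the (numerator of the) derivative
`(num R)' · denom R − num R · (denom R)'`, which rules out exactly the maps of the form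
`Q(z^p)` in characteristic `p > 0` (and the constants in characteristic 0). -/
theorem montel_stmt1 {K : Type*} [Field K] [IsAlgClosed K] (S : Finset (Option K)) :
    {R : RatFunc K |
        derivative R.num * R.denom - R.num * derivative R.denom ≠ 0 ∧
        ∀ x : Option K,
          evalP1 R x ∈ ({some 0, some 1, none} : Set (Option K)) → x ∈ S}.Finite := by
  classical
  set T : Finset K := S.preimage some ((Option.some_injective K).injOn) with hTdef
  set N : ℕ := T.card with hNdef
  set E : Set (RatFunc K) := {R : RatFunc K |
        derivative R.num * R.denom - R.num * derivative R.denom ≠ 0 ∧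
        ∀ x : Option K,
          evalP1 R x ∈ ({some 0, some 1, none} : Set (Option K)) → x ∈ S} with hEdef
  -- basic facts about members of E
  have hfacts : ∀ R ∈ E, R.num ≠ 0 ∧ R.num - R.denom ≠ 0 ∧
      (∀ z : K, R.num.eval z = 0 → z ∈ T) ∧
      (∀ z : K, R.denom.eval z = 0 → z ∈ T) ∧
      (∀ z : K, (R.num - R.denom).eval z = 0 → z ∈ T) ∧
      R.num.natDegree ≤ N ∧ R.denom.natDegree ≤ N ∧ (R.num - R.denom).natDegree ≤ N := by
    intro R hR
    obtain ⟨hW, hpre⟩ := hR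
    have hn0 : R.num ≠ 0 := by
      intro h
      apply hW
      rw [h]
      simp
    have hnd : R.num - R.denom ≠ 0 := by
      intro h
      rw [sub_eq_zero] at h
      apply hW
      rw [h]
      ring
    have hcop := RatFunc.isCoprime_num_denom R
    have hnoz : ∀ z : K, R.num.eval z = 0 → R.denom.eval z ≠ 0 := by
      intro z h1 h2
      obtain ⟨u, v, huv⟩ := hcop
      have := congrArg (Polynomial.eval z) huv
      simp [h1, h2] at this
    have hroots1 : ∀ z : K, R.num.eval z = 0 → z ∈ T := by
      intro z hz
      have hd := hnoz z hz
      have hev : evalP1 R (some z) = some 0 := by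
        simp [evalP1, if_neg hd, hz]
      have := hpre (some z) (by rw [hev]; left; rfl)
      rwa [hTdef, Finset.mem_preimage]
    have hroots2 : ∀ z : K, R.denom.eval z = 0 → z ∈ T := by
      intro z hz
      have hev : evalP1 R (some z) = none := by
        simp [evalP1, if_pos hz]
      have := hpre (some z) (by rw [hev]; right; right; rfl)
      rwa [hTdef, Finset.mem_preimage]
    have hroots3 : ∀ z : K, (R.num - R.denom).eval z = 0 → z ∈ T := by
      intro z hz
      rw [eval_sub, sub_eq_zero] at hz
      have hd : R.denom.eval z ≠ 0 := by
        intro h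
        exact hnoz z (by rw [hz, h]) h
      have hev : evalP1 R (some z) = some 1 := by
        simp [evalP1, if_neg hd, hz, div_self hd]
      have := hpre (some z) (by rw [hev]; right; left; rfl)
      rwa [hTdef, Finset.mem_preimage]
    refine ⟨hn0, hnd, hroots1, hroots2, hroots3, ?_⟩
    -- degree bounds via Mason-Stothers
    have hb0 : (-R.denom : K[X]) ≠ 0 := neg_ne_zero.mpr (RatFunc.denom_ne_zero R)
    have hc0 : R.denom - R.num ≠ 0 := by
      intro h
      rw [sub_eq_zero] at h
      exact hnd (by rw [h, sub_self])
    have hab : IsCoprime R.num (-R.denom) := hcop.neg_right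
    have hbc : IsCoprime (-R.denom : K[X]) (R.denom - R.num) := by
      have h1 : IsCoprime R.denom (-R.num : K[X]) := hcop.symm.neg_right
      have h2 := h1.add_mul_left_right 1
      have h3 : -R.num + R.denom * 1 = R.denom - R.num := by ring
      rw [h3] at h2
      exact h2.neg_left
    have hca : IsCoprime (R.denom - R.num) R.num := by
      have h2 := hcop.add_mul_left_right (-1)
      have h3 : R.denom + R.num * (-1) = R.denom - R.num := by ring
      rw [h3] at h2
      exact h2.symm
    have hsum : R.num + -R.denom + (R.denom - R.num) = 0 := by ring
    rcases Polynomial.abc hn0 hb0 hc0 hab hsum with h | ⟨h1, h2, _⟩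
    · set P := R.num * -R.denom * (R.denom - R.num) with hPdef
      have hP0 : P ≠ 0 := mul_ne_zero (mul_ne_zero hn0 hb0) hc0
      have hradle : (UniqueFactorizationMonoid.radical P).natDegree ≤ N := by
        refine le_trans (montel_radical_natDegree_le_card P hP0) ?_
        apply Finset.card_le_card
        intro z hz
        rw [Multiset.mem_toFinset, mem_roots'] at hz
        have := hz.2
        rw [IsRoot, hPdef, eval_mul, eval_mul, mul_eq_zero, mul_eq_zero] at this
        rcases this with (h | h) | h
        · exact hroots1 z h
        · rw [eval_neg, neg_eq_zero] at h
          exact hroots2 z h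
        · rw [eval_sub, sub_eq_zero] at h
          exact hroots3 z (by rw [eval_sub, h, sub_self])
      obtain ⟨ha, hb, hc⟩ := h
      refine ⟨?_, ?_, ?_⟩
      · omega
      · have : (-R.denom : K[X]).natDegree = R.denom.natDegree := natDegree_neg _
        omega
      · have : (R.num - R.denom).natDegree = (R.denom - R.num).natDegree := by
          rw [← natDegree_neg, neg_sub]
        omega
    · exfalso
      apply hW
      rw [derivative_neg, neg_eq_zero] at h2
      rw [h1, h2]
      ring
  -- the injection into triples of root multisets
  set f : RatFunc K → Multiset K × Multiset K × Multiset K :=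
    fun R => (R.num.roots, R.denom.roots, (R.num - R.denom).roots) with hfdef
  -- target finite set
  set A : Set (Multiset K) := {m | m ≤ N • T.val} with hAdef
  have hA : A.Finite := by
    apply Set.Finite.ofFinset (N • T.val).powerset.toFinset
    intro m
    simp [hAdef, Multiset.mem_powerset]
  have hle : ∀ (m : Multiset K), Multiset.card m ≤ N → (∀ x ∈ m, x ∈ T) → m ∈ A := by
    intro m hcard hmem
    rw [hAdef, Set.mem_setOf_eq, Multiset.le_iff_count]
    intro a
    by_cases ha : a ∈ T
    · have h1 : T.val.count a = 1 := Multiset.count_eq_one_of_mem T.nodup ha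
      rw [Multiset.count_nsmul, h1, mul_one]
      exact le_trans (Multiset.count_le_card a m) hcard
    · have : m.count a = 0 := Multiset.count_eq_zero_of_notMem (fun h => ha (hmem a h))
      rw [this]
      exact Nat.zero_le _
  apply Set.Finite.of_finite_image (f := f)
  · apply Set.Finite.subset (hA.prod (hA.prod hA))
    rintro ⟨m1, m2, m3⟩ ⟨R, hR, hfR⟩
    obtain ⟨hn0, hnd, hr1, hr2, hr3, hd1, hd2, hd3⟩ := hfacts R hR
    rw [hfdef] at hfR
    simp only [Prod.mk.injEq] at hfR
    obtain ⟨e1, e2, e3⟩ := hfR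
    have key : ∀ (p : K[X]), p ≠ 0 → p.natDegree ≤ N → (∀ z : K, p.eval z = 0 → z ∈ T) →
        p.roots ∈ A := by
      intro p hp hdeg hroot
      apply hle
      · exact le_trans (card_roots' p) hdeg
      · intro x hx
        exact hroot x ((mem_roots'.mp hx).2)
    refine ⟨?_, ?_, ?_⟩
    · rw [← e1]; exact key _ hn0 hd1 hr1
    · rw [← e2]; exact key _ (RatFunc.denom_ne_zero R) hd2 hr2
    · rw [← e3]; exact key _ hnd hd3 hr3
  · -- injectivity
    intro R hR R' hR' hEq
    obtain ⟨hn0, hnd, _, _, _, _, _, _⟩ := hfacts R hR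
    rw [hfdef] at hEq
    simp only [Prod.mk.injEq] at hEq
    obtain ⟨h1, h2, h3⟩ := hEq
    have hd : R.denom = R'.denom := by
      rw [(IsAlgClosed.splits R.denom).eq_prod_roots_of_monic (R.monic_denom),
        (IsAlgClosed.splits R'.denom).eq_prod_roots_of_monic (R'.monic_denom), h2]
    rw [← hd] at h3
    set M1 : K[X] := (R.num.roots.map fun a => X - C a).prod with hM1def
    set M3 : K[X] := ((R.num - R.denom).roots.map fun a => X - C a).prod with hM3def
    have hM1 : M1.Monic := monic_multiset_prod_of_monic _ _ (fun a _ => monic_X_sub_C a)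
    have hM3 : M3.Monic := monic_multiset_prod_of_monic _ _ (fun a _ => monic_X_sub_C a)
    set c : K := R.num.leadingCoeff
    set c' : K := R'.num.leadingCoeff
    set e : K := (R.num - R.denom).leadingCoeff
    set e' : K := (R'.num - R.denom).leadingCoeff
    have hn : R.num = C c * M1 := (IsAlgClosed.splits _).eq_prod_roots
    have hn' : R'.num = C c' * M1 := by
      rw [hM1def, h1]
      exact (IsAlgClosed.splits _).eq_prod_roots
    have hs : R.num - R.denom = C e * M3 :=
      (IsAlgClosed.splits _).eq_prod_roots
    have hs' : R'.num - R.denom = C e' * M3 := by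
      rw [hM3def, h3]
      exact (IsAlgClosed.splits _).eq_prod_roots
    suffices hcc : c = c' by
      have hnum : R.num = R'.num := by rw [hn, hn', hcc]
      rw [← RatFunc.num_div_denom R, ← RatFunc.num_div_denom R', hnum, hd]
    by_contra hcc
    have heq : C (c - c') * M1 = C (e - e') * M3 := by
      rw [C_sub, C_sub, sub_mul, sub_mul, ← hn, ← hn', ← hs, ← hs']
      ring
    have hccne : c - c' ≠ 0 := sub_ne_zero_of_ne hcc
    have hee : c - c' = e - e' := by
      have hlc := congrArg leadingCoeff heq
      rwa [leadingCoeff_mul, leadingCoeff_mul, leadingCoeff_C, leadingCoeff_C,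
        hM1.leadingCoeff, hM3.leadingCoeff, mul_one, mul_one] at hlc
    have hM13 : M1 = M3 := by
      have heq' : C (c - c') * M1 = C (c - c') * M3 := by rw [heq, ← hee]
      exact mul_left_cancel₀ (by rwa [Ne, C_eq_zero]) heq'
    have hdform : R.denom = C (c - e) * M1 := by
      calc R.denom = R.num - (R.num - R.denom) := by ring
        _ = C c * M1 - C e * M1 := by rw [hs, hn, ← hM13]
        _ = C (c - e) * M1 := by rw [C_sub, sub_mul]
    have hunit : IsUnit M1 :=
      (RatFunc.isCoprime_num_denom R).isUnit_of_dvd'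
        (hn ▸ dvd_mul_left M1 (C c)) (hdform ▸ dvd_mul_left M1 (C (c - e)))
    have hM1one : M1 = 1 := hM1.eq_one_of_isUnit hunit
    obtain ⟨hW, -⟩ := hR
    apply hW
    have hdn : derivative R.num = 0 := by rw [hn, hM1one, mul_one, derivative_C]
    have hdd : derivative R.denom = 0 := by rw [hdform, hM1one, mul_one, derivative_C]
    rw [hdn, hdd]
    ring
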